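/- Any finite set of points in the plane with pairwise distinct x-coordinates and pairwise distinct y-coordinates can be colored with 2 colors such that every bottomless rectangle containing at least 4 of the points contains two points of different colors. -/

import Mathlib

def bottomless (a b c : ℝ) : Set (ℝ × ℝ) := {p | a < p.1 ∧ p.1 < b ∧ p.2 < c}

namespace Stmt3Aux

abbrev Pt := ℝ × ℝ

theorem main (P : Finset Pt)
    (hx : ∀ p ∈ P, ∀ q ∈ P, p.1 = q.1 → p = q)
    (hy : ∀ p ∈ P, ∀ q ∈ P, p.2 = q.2 → p = q) :
    ∀ n : ℕ, ∀ Q : Finset Pt, Q.card ≤ n → Q ⊆ P →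
      (∀ p ∈ P, ∀ r ∈ Q, p.2 ≤ r.2 → p ∈ Q) →
      ∃ σ : Pt → Option Bool,
        (∀ p, p ∉ Q → σ p = none) ∧
        (∀ u ∈ Q, ∀ v ∈ Q, σ u = none → σ v = none → u.1 < v.1 →
            ∃ w ∈ Q, u.1 < w.1 ∧ w.1 < v.1) ∧
        (∀ u ∈ Q, ∀ v ∈ Q, ∀ cu cv : Bool, σ u = some cu → σ v = some cv → u.1 < v.1 →
            (∀ w ∈ Q, u.1 < w.1 → w.1 < v.1 → σ w = none) → cu ≠ cv) ∧
        (∀ u ∈ Q, ∀ cu : Bool, σ u = some cu → (∀ w ∈ Q, w.1 < u.1 → σ w = none) → cu = false) ∧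
        (∀ u ∈ Q, ∀ cu : Bool, σ u = some cu → (∀ w ∈ Q, u.1 < w.1 → σ w = none) → cu = true) ∧
        (∀ q ∈ Q, ∀ S : Finset Pt, (∀ s ∈ S, s ∈ Q ∧ s.2 ≤ q.2) → q ∈ S →
            (∀ s1 ∈ S, ∀ s2 ∈ S, ∀ r ∈ Q, r.2 ≤ q.2 → s1.1 ≤ r.1 → r.1 ≤ s2.1 → r ∈ S) →
            4 ≤ S.card →
            ∃ p1 ∈ S, ∃ p2 ∈ S, ∃ c1 c2 : Bool, σ p1 = some c1 ∧ σ p2 = some c2 ∧ c1 ≠ c2) := by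
  intro n
  induction n with
  | zero =>
    intro Q hcard _ _
    have hQ : Q = ∅ := Finset.card_eq_zero.mp (Nat.le_zero.mp hcard)
    subst hQ
    refine ⟨fun _ => none, fun _ _ => rfl, ?_, ?_, ?_, ?_, ?_⟩ <;> intro u hu <;>
      exact absurd hu (Finset.notMem_empty u)
  | succ n ih =>
    intro Q hcard hQP hpre
    classical
    rcases Q.eq_empty_or_nonempty with rfl | hne
    · refine ⟨fun _ => none, fun _ _ => rfl, ?_, ?_, ?_, ?_, ?_⟩ <;> intro u hu <;>
        exact absurd hu (Finset.notMem_empty u)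
    obtain ⟨q, hqQ, hqmax⟩ := Q.exists_max_image (fun p => p.2) hne
    set Q' := Q.erase q with hQ'def
    have hq'mem : q ∉ Q' := Finset.notMem_erase q Q
    have hQ'sub : Q' ⊆ Q := Finset.erase_subset q Q
    have hmem' : ∀ r ∈ Q, r ≠ q → r ∈ Q' := fun r hr hne' => Finset.mem_erase.mpr ⟨hne', hr⟩
    have hxQ : ∀ u ∈ Q, ∀ v ∈ Q, u.1 = v.1 → u = v := fun u hu v hv h =>
      hx u (hQP hu) v (hQP hv) h
    have htri : ∀ u ∈ Q, ∀ v ∈ Q, u.1 < v.1 ∨ u = v ∨ v.1 < u.1 := by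
      intro u hu v hv
      rcases lt_trichotomy u.1 v.1 with h | h | h
      exacts [Or.inl h, Or.inr (Or.inl (hxQ u hu v hv h)), Or.inr (Or.inr h)]
    have hylt : ∀ r ∈ Q', r.2 < q.2 := by
      intro r hr
      refine lt_of_le_of_ne (hqmax r (hQ'sub hr)) (fun h => ?_)
      exact (Finset.mem_erase.mp hr).1 (hy r (hQP (hQ'sub hr)) q (hQP hqQ) h)
    have hcard' : Q'.card ≤ n := by
      have h1 : Q'.card = Q.card - 1 := Finset.card_erase_of_mem hqQ
      have h2 : 0 < Q.card := Finset.card_pos.mpr hne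
      omega
    have hQ'P : Q' ⊆ P := hQ'sub.trans hQP
    have hpre' : ∀ p ∈ P, ∀ r ∈ Q', p.2 ≤ r.2 → p ∈ Q' := by
      intro p hp r hr hle
      refine hmem' p (hpre p hp r (hQ'sub hr) hle) (fun h => ?_)
      subst h
      exact absurd hle (not_le.mpr (hylt r hr))
    obtain ⟨σ', hdom', h1', h2', h3', h4', hw'⟩ := ih Q' hcard' hQ'P hpre'
    have hσ'q : σ' q = none := hdom' q hq'mem
    -- transfer of the window condition for old points
    have hWold : ∀ σ : Pt → Option Bool, (∀ w c, σ' w = some c → σ w = some c) →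
        ∀ q'' ∈ Q, q'' ≠ q → ∀ S : Finset Pt, (∀ s ∈ S, s ∈ Q ∧ s.2 ≤ q''.2) → q'' ∈ S →
        (∀ s1 ∈ S, ∀ s2 ∈ S, ∀ r ∈ Q, r.2 ≤ q''.2 → s1.1 ≤ r.1 → r.1 ≤ s2.1 → r ∈ S) →
        4 ≤ S.card →
        ∃ p1 ∈ S, ∃ p2 ∈ S, ∃ c1 c2 : Bool, σ p1 = some c1 ∧ σ p2 = some c2 ∧ c1 ≠ c2 := by
      intro σ hkeep q'' hq'' hq''ne S hS hq''S hconv hcards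
      have hq''Q' : q'' ∈ Q' := hmem' q'' hq'' hq''ne
      have hS' : ∀ s ∈ S, s ∈ Q' ∧ s.2 ≤ q''.2 := by
        intro s hs
        obtain ⟨hsQ, hsle⟩ := hS s hs
        refine ⟨hmem' s hsQ (fun h => ?_), hsle⟩
        subst h
        exact absurd hsle (not_le.mpr (hylt q'' hq''Q'))
      obtain ⟨p1, hp1, p2, hp2, c1, c2, hc1, hc2, hcc⟩ :=
        hw' q'' hq''Q' S hS' hq''S
          (fun s1 hs1 s2 hs2 r hr hrle h1 h2 => hconv s1 hs1 s2 hs2 r (hQ'sub hr) hrle h1 h2)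
          hcards
      exact ⟨p1, hp1, p2, hp2, c1, c2, hkeep p1 c1 hc1, hkeep p2 c2 hc2, hcc⟩
    have bne : ∀ b : Bool, (!b) ≠ b := by intro b; cases b <;> decide
    have bne' : ∀ b : Bool, b ≠ (!b) := by intro b; cases b <;> decide
    by_cases hA : ∃ a1 ∈ Q', (a1.1 < q.1 ∧ ∀ w ∈ Q', w.1 < q.1 → w.1 ≤ a1.1) ∧ σ' a1 = none
    · -- Case A : the left neighbour exists and is uncoloured
      obtain ⟨a1, ha1Q', ⟨ha1lt, ha1max⟩, ha1n⟩ := hA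
      have ha1Q : a1 ∈ Q := hQ'sub ha1Q'
      have ha1q : a1 ≠ q := by rintro rfl; exact lt_irrefl _ ha1lt
      have ha1adj : ∀ w ∈ Q, a1.1 < w.1 → w.1 < q.1 → False := by
        intro w hw h1 h2
        have hwq : w ≠ q := by rintro rfl; exact lt_irrefl _ h2
        exact absurd (ha1max w (hmem' w hw hwq) h2) (not_le.mpr h1)
      obtain ⟨ca, hD, hE, hF, hG⟩ :
          ∃ ca : Bool,
            (∀ u ∈ Q', ∀ cu : Bool, σ' u = some cu → u.1 < a1.1 →
              (∀ w ∈ Q', u.1 < w.1 → w.1 < a1.1 → σ' w = none) → cu = !ca) ∧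
            (∀ v ∈ Q', ∀ cv : Bool, σ' v = some cv → a1.1 < v.1 →
              (∀ w ∈ Q', a1.1 < w.1 → w.1 < v.1 → σ' w = none) → cv ≠ !ca) ∧
            ((∀ w ∈ Q', q.1 < w.1 → σ' w = none) → ca = false) ∧
            ((¬∃ w ∈ Q', w.1 < a1.1 ∧ ∃ c : Bool, σ' w = some c) → ca = false) := by
        by_cases hC : ∃ w ∈ Q', w.1 < a1.1 ∧ ∃ c : Bool, σ' w = some c
        · obtain ⟨w0, hw0Q', hw0lt, c0, hc0⟩ := hC
          have hTne : (Q'.filter (fun w => w.1 < a1.1 ∧ (σ' w).isSome)).Nonempty :=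
            ⟨w0, Finset.mem_filter.mpr ⟨hw0Q', hw0lt, by simp [hc0]⟩⟩
          obtain ⟨l, hlmem, hlmax⟩ :=
            Finset.exists_max_image _ (fun p => p.1) hTne
          have hlf := Finset.mem_filter.mp hlmem
          obtain ⟨hlQ', hllt, hlsome⟩ : l ∈ Q' ∧ l.1 < a1.1 ∧ (σ' l).isSome :=
            ⟨hlf.1, hlf.2.1, hlf.2.2⟩
          obtain ⟨cl, hcl⟩ := Option.isSome_iff_exists.mp hlsome
          have hlnear : ∀ w ∈ Q', l.1 < w.1 → w.1 < a1.1 → σ' w = none := by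
            intro w hw h1 h2
            cases hsw : σ' w with
            | none => rfl
            | some c =>
              exact absurd (hlmax w (Finset.mem_filter.mpr ⟨hw, h2, by simp [hsw]⟩))
                (not_le.mpr h1)
          refine ⟨!cl, ?_, ?_, ?_, ?_⟩
          · intro u huQ' cu hcu hult hbetw
            rw [Bool.not_not]
            rcases htri u (hQ'sub huQ') l (hQ'sub hlQ') with h | h | h
            · have := hbetw l hlQ' h hllt
              rw [hcl] at this; exact nomatch this
            · subst h; rw [hcu] at hcl; exact Option.some.inj hcl
            · have := hlnear u huQ' h hult
              rw [hcu] at this; exact nomatch this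
          · intro v hvQ' cv hcv hgt hbetw
            rw [Bool.not_not]
            have hbt : ∀ w ∈ Q', l.1 < w.1 → w.1 < v.1 → σ' w = none := by
              intro w hw h1 h2
              rcases htri w (hQ'sub hw) a1 ha1Q with h3 | h3 | h3
              · exact hlnear w hw h1 h3
              · subst h3; exact ha1n
              · exact hbetw w hw h3 h2
            exact fun h => h2' l hlQ' v hvQ' cl cv hcl hcv (lt_trans hllt hgt) hbt (h ▸ rfl)
          · intro hyp
            have hlt : cl = true := by
              apply h4' l hlQ' cl hcl
              intro w hw h1
              rcases htri w (hQ'sub hw) a1 ha1Q with h3 | h3 | h3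
              · exact hlnear w hw h1 h3
              · subst h3; exact ha1n
              · rcases htri w (hQ'sub hw) q hqQ with h4 | h4 | h4
                · exact (ha1adj w (hQ'sub hw) h3 h4).elim
                · subst h4; exact absurd hw hq'mem
                · exact hyp w hw h4
            rw [hlt]; decide
          · intro h; exact absurd ⟨l, hlQ', hllt, cl, hcl⟩ h
        · refine ⟨false, ?_, ?_, fun _ => rfl, fun _ => rfl⟩
          · intro u huQ' cu hcu hult _
            exact absurd ⟨u, huQ', hult, cu, hcu⟩ hC
          · intro v hvQ' cv hcv hgt hbetw
            have hcvf : cv = false := by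
              apply h3' v hvQ' cv hcv
              intro w hw h1
              rcases htri w (hQ'sub hw) a1 ha1Q with h3 | h3 | h3
              · cases hsw : σ' w with
                | none => rfl
                | some c => exact absurd ⟨w, hw, h3, c, hsw⟩ hC
              · subst h3; exact ha1n
              · exact hbetw w hw h3 h1
            rw [hcvf]; decide
      set σ : Pt → Option Bool :=
        fun p => if p = q then some (!ca) else if p = a1 then some ca else σ' p with hσdef
      have hσq : σ q = some (!ca) := by simp [hσdef]
      have hσa1 : σ a1 = some ca := by simp [hσdef, ha1q]
      have hkeep : ∀ w c, σ' w = some c → σ w = some c := by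
        intro w c h
        have hwq : w ≠ q := by rintro rfl; rw [hσ'q] at h; exact nomatch h
        have hwa : w ≠ a1 := by rintro rfl; rw [ha1n] at h; exact nomatch h
        simp [hσdef, hwq, hwa, h]
      have hback : ∀ w c, σ w = some c →
          (q = w ∧ (!ca) = c) ∨ (a1 = w ∧ ca = c) ∨ (w ≠ q ∧ w ≠ a1 ∧ σ' w = some c) := by
        intro w c h
        by_cases h1 : w = q
        · subst h1; rw [hσq] at h; exact Or.inl ⟨rfl, Option.some.inj h⟩
        by_cases h2 : w = a1
        · subst h2; rw [hσa1] at h; exact Or.inr (Or.inl ⟨rfl, Option.some.inj h⟩)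
        · right; right; refine ⟨h1, h2, ?_⟩
          rw [hσdef] at h; simpa [h1, h2] using h
      have hnone : ∀ w, σ w = none → w ≠ q ∧ w ≠ a1 ∧ σ' w = none := by
        intro w h
        by_cases h1 : w = q
        · subst h1; rw [hσq] at h; exact nomatch h
        by_cases h2 : w = a1
        · subst h2; rw [hσa1] at h; exact nomatch h
        · refine ⟨h1, h2, ?_⟩; rw [hσdef] at h; simpa [h1, h2] using h
      refine ⟨σ, ?_, ?_, ?_, ?_, ?_, ?_⟩
      · intro p hp
        have h1 : p ≠ q := fun e => hp (e ▸ hqQ)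
        have h2 : p ≠ a1 := fun e => hp (e ▸ ha1Q)
        have h3 : σ' p = none := hdom' p (fun hm => hp (hQ'sub hm))
        simp [hσdef, h1, h2, h3]
      · intro u hu v hv hun hvn hlt
        obtain ⟨huq, hua, hun'⟩ := hnone u hun
        obtain ⟨hvq, hva, hvn'⟩ := hnone v hvn
        obtain ⟨w, hw, hw1, hw2⟩ := h1' u (hmem' u hu huq) v (hmem' v hv hvq) hun' hvn' hlt
        exact ⟨w, hQ'sub hw, hw1, hw2⟩
      · intro u hu v hv cu cv hcu hcv hlt hbet
        rcases hback u cu hcu with ⟨rfl, rfl⟩ | ⟨rfl, rfl⟩ | ⟨huq, hua, hcu'⟩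
        · rcases hback v cv hcv with ⟨rfl, rfl⟩ | ⟨rfl, rfl⟩ | ⟨hvq, hva, hcv'⟩
          · exact absurd hlt (lt_irrefl _)
          · exact absurd hlt (not_lt.mpr (le_of_lt ha1lt))
          · have hvQ' : v ∈ Q' := hmem' v hv hvq
            have hbetw : ∀ w ∈ Q', a1.1 < w.1 → w.1 < v.1 → σ' w = none := by
              intro w hw h1 h2
              rcases htri w (hQ'sub hw) q hqQ with h3 | h3 | h3
              · exact ((ha1adj w (hQ'sub hw) h1 h3)).elim
              · subst h3; exact absurd hw hq'mem
              · exact (hnone w (hbet w (hQ'sub hw) h3 h2)).2.2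
            exact fun h => (hE v hvQ' cv hcv' (lt_trans ha1lt hlt) hbetw) h.symm
        · rcases hback v cv hcv with ⟨rfl, rfl⟩ | ⟨rfl, rfl⟩ | ⟨hvq, hva, hcv'⟩
          · exact fun h => (bne ca) h.symm
          · exact absurd hlt (lt_irrefl _)
          · exfalso
            have hvQ' : v ∈ Q' := hmem' v hv hvq
            rcases htri v hv q hqQ with h3 | h3 | h3
            · exact ha1adj v hv hlt h3
            · subst h3; exact hq'mem hvQ'
            · have := hbet q hqQ ha1lt h3
              rw [hσq] at this; exact nomatch this
        · rcases hback v cv hcv with ⟨rfl, rfl⟩ | ⟨rfl, rfl⟩ | ⟨hvq, hva, hcv'⟩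
          · exfalso
            have huQ' : u ∈ Q' := hmem' u hu huq
            rcases htri u hu a1 ha1Q with h3 | h3 | h3
            · have := hbet a1 ha1Q h3 ha1lt
              rw [hσa1] at this; exact nomatch this
            · exact hua h3
            · exact ha1adj u hu h3 hlt
          · have huQ' : u ∈ Q' := hmem' u hu huq
            have : cu = !ca := hD u huQ' cu hcu' hlt
              (fun w hw h1 h2 => (hnone w (hbet w (hQ'sub hw) h1 h2)).2.2)
            rw [this]; exact bne ca
          · exact h2' u (hmem' u hu huq) v (hmem' v hv hvq) cu cv hcu' hcv' hlt
              (fun w hw h1 h2 => (hnone w (hbet w (hQ'sub hw) h1 h2)).2.2)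
      · intro u hu cu hcu hleft
        rcases hback u cu hcu with ⟨rfl, rfl⟩ | ⟨rfl, rfl⟩ | ⟨huq, hua, hcu'⟩
        · have := hleft a1 ha1Q ha1lt
          rw [hσa1] at this; exact nomatch this
        · apply hG
          rintro ⟨w, hwQ', hwlt, c, hc⟩
          have := hleft w (hQ'sub hwQ') hwlt
          rw [hkeep w c hc] at this; exact nomatch this
        · exact h3' u (hmem' u hu huq) cu hcu'
            (fun w hw h1 => (hnone w (hleft w (hQ'sub hw) h1)).2.2)
      · intro u hu cu hcu hright
        rcases hback u cu hcu with ⟨rfl, rfl⟩ | ⟨rfl, rfl⟩ | ⟨huq, hua, hcu'⟩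
        · have : ca = false := hF (fun w hw h1 => (hnone w (hright w (hQ'sub hw) h1)).2.2)
          rw [this]; decide
        · have := hright q hqQ ha1lt
          rw [hσq] at this; exact nomatch this
        · have huQ' : u ∈ Q' := hmem' u hu huq
          rcases htri u hu q hqQ with h3 | h3 | h3
          · have := hright q hqQ h3
            rw [hσq] at this; exact nomatch this
          · exact absurd h3 huq
          · exact h4' u huQ' cu hcu'
              (fun w hw h1 => (hnone w (hright w (hQ'sub hw) h1)).2.2)
      · intro q'' hq'' S hS hqS hconv hcards
        by_cases hq''q : q'' = q
        · subst hq''q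
          by_cases hSL : ∃ s ∈ S, s.1 < q''.1
          · obtain ⟨s, hsS, hslt⟩ := hSL
            have hsQ : s ∈ Q := (hS s hsS).1
            have hsq : s ≠ q'' := by rintro rfl; exact lt_irrefl _ hslt
            have hsa1 : s.1 ≤ a1.1 := ha1max s (hmem' s hsQ hsq) hslt
            have ha1S : a1 ∈ S :=
              hconv s hsS q'' hqS a1 ha1Q (hqmax a1 ha1Q) hsa1 (le_of_lt ha1lt)
            exact ⟨a1, ha1S, q'', hqS, ca, !ca, hσa1, hσq, bne' ca⟩
          · push_neg at hSL
            have hTne : (S.erase q'').Nonempty := by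
              apply Finset.card_pos.mp
              have := Finset.card_erase_of_mem hqS
              omega
            obtain ⟨s0, hs0T⟩ := hTne
            have hs0S : s0 ∈ S := Finset.mem_of_mem_erase hs0T
            have hs0q : s0 ≠ q'' := (Finset.mem_erase.mp hs0T).1
            have hs0Q : s0 ∈ Q := (hS s0 hs0S).1
            have hs0gt : q''.1 < s0.1 :=
              lt_of_le_of_ne (hSL s0 hs0S) (fun h => hs0q (hxQ s0 hs0Q q'' hqQ h.symm))
            have hs0Q' : s0 ∈ Q' := hmem' s0 hs0Q hs0q
            have hRne : (Q'.filter (fun w => q''.1 < w.1)).Nonempty :=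
              ⟨s0, Finset.mem_filter.mpr ⟨hs0Q', hs0gt⟩⟩
            obtain ⟨b1, hb1mem, hb1min⟩ := Finset.exists_min_image _ (fun p => p.1) hRne
            obtain ⟨hb1Q', hb1gt⟩ := Finset.mem_filter.mp hb1mem
            have hb1minle : ∀ w ∈ Q', q''.1 < w.1 → b1.1 ≤ w.1 :=
              fun w hw h => hb1min w (Finset.mem_filter.mpr ⟨hw, h⟩)
            have hb1le : b1.1 ≤ s0.1 := hb1minle s0 hs0Q' hs0gt
            have hb1S : b1 ∈ S :=
              hconv q'' hqS s0 hs0S b1 (hQ'sub hb1Q') (hqmax b1 (hQ'sub hb1Q'))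
                (le_of_lt hb1gt) hb1le
            have hb1adj : ∀ w ∈ Q', q''.1 < w.1 → w.1 < b1.1 → False :=
              fun w hw h1 h2 => absurd (hb1minle w hw h1) (not_le.mpr h2)
            obtain ⟨cb, hcb⟩ : ∃ cb, σ' b1 = some cb := by
              cases hsb : σ' b1 with
              | some cb => exact ⟨cb, rfl⟩
              | none =>
                exfalso
                obtain ⟨w, hw, hw1, hw2⟩ :=
                  h1' a1 ha1Q' b1 hb1Q' ha1n hsb (lt_trans ha1lt hb1gt)
                rcases htri w (hQ'sub hw) q'' hqQ with h | h | h
                · exact ha1adj w (hQ'sub hw) hw1 h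
                · subst h; exact hq'mem hw
                · exact hb1adj w hw h hw2
            have hcbne : cb ≠ !ca := by
              apply hE b1 hb1Q' cb hcb (lt_trans ha1lt hb1gt)
              intro w hw h1 h2
              exfalso
              rcases htri w (hQ'sub hw) q'' hqQ with h | h | h
              · exact ha1adj w (hQ'sub hw) h1 h
              · subst h; exact hq'mem hw
              · exact hb1adj w hw h h2
            exact ⟨q'', hqS, b1, hb1S, !ca, cb, hσq, hkeep b1 cb hcb, fun h => hcbne h.symm⟩
        · exact hWold σ hkeep q'' hq'' hq''q S hS hqS hconv hcards
    · -- Case B : right neighbour exists and is uncoloured (left one coloured or absent)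
      by_cases hB : ∃ b1 ∈ Q', (q.1 < b1.1 ∧ ∀ w ∈ Q', q.1 < w.1 → b1.1 ≤ w.1) ∧ σ' b1 = none
      · obtain ⟨b1, hb1Q', ⟨hb1gt, hb1min⟩, hb1n⟩ := hB
        have hb1Q : b1 ∈ Q := hQ'sub hb1Q'
        have hb1q : b1 ≠ q := by rintro rfl; exact lt_irrefl _ hb1gt
        have hb1adj : ∀ w ∈ Q, q.1 < w.1 → w.1 < b1.1 → False := by
          intro w hw h1 h2
          have hwq : w ≠ q := by rintro rfl; exact lt_irrefl _ h1
          exact absurd (hb1min w (hmem' w hw hwq) h1) (not_le.mpr h2)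
        obtain ⟨cq, hD, hE, hF, hLft, hGB⟩ :
            ∃ cq : Bool,
              (∀ u ∈ Q', ∀ cu : Bool, σ' u = some cu → u.1 < q.1 →
                (∀ w ∈ Q', u.1 < w.1 → w.1 < q.1 → σ' w = none) → cu = !cq) ∧
              (∀ v ∈ Q', ∀ cv : Bool, σ' v = some cv → b1.1 < v.1 →
                (∀ w ∈ Q', b1.1 < w.1 → w.1 < v.1 → σ' w = none) → cv ≠ !cq) ∧
              ((∀ w ∈ Q', b1.1 < w.1 → σ' w = none) → cq = false) ∧
              ((∃ w ∈ Q', w.1 < q.1) →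
                ∃ a1 ∈ Q', a1.1 < q.1 ∧ (∀ w ∈ Q', w.1 < q.1 → w.1 ≤ a1.1) ∧
                  σ' a1 = some (!cq)) ∧
              ((¬∃ w ∈ Q', w.1 < q.1) → cq = false) := by
          by_cases hL : ∃ w ∈ Q', w.1 < q.1
          · obtain ⟨w0, hw0Q', hw0lt⟩ := hL
            have hTne : (Q'.filter (fun w => w.1 < q.1)).Nonempty :=
              ⟨w0, Finset.mem_filter.mpr ⟨hw0Q', hw0lt⟩⟩
            obtain ⟨a1, ha1mem, ha1maxf⟩ := Finset.exists_max_image _ (fun p => p.1) hTne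
            have ha1f := Finset.mem_filter.mp ha1mem
            have ha1Q' : a1 ∈ Q' := ha1f.1
            have ha1lt : a1.1 < q.1 := ha1f.2
            have ha1max : ∀ w ∈ Q', w.1 < q.1 → w.1 ≤ a1.1 :=
              fun w hw h => ha1maxf w (Finset.mem_filter.mpr ⟨hw, h⟩)
            obtain ⟨ca1, hca1⟩ : ∃ c, σ' a1 = some c := by
              cases hsa : σ' a1 with
              | some c => exact ⟨c, rfl⟩
              | none => exact absurd ⟨a1, ha1Q', ⟨ha1lt, ha1max⟩, hsa⟩ hA
            have ha1adj : ∀ w ∈ Q', a1.1 < w.1 → w.1 < q.1 → False :=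
              fun w hw h1 h2 => absurd (ha1max w hw h2) (not_le.mpr h1)
            refine ⟨!ca1, ?_, ?_, ?_, ?_, ?_⟩
            · intro u huQ' cu hcu hult hbetw
              rw [Bool.not_not]
              rcases htri u (hQ'sub huQ') a1 (hQ'sub ha1Q') with h | h | h
              · have := hbetw a1 ha1Q' h ha1lt
                rw [hca1] at this; exact nomatch this
              · subst h; rw [hcu] at hca1; exact Option.some.inj hca1
              · exact absurd (ha1max u huQ' hult) (not_le.mpr h)
            · intro v hvQ' cv hcv hgt hbetw
              rw [Bool.not_not]
              have hbt : ∀ w ∈ Q', a1.1 < w.1 → w.1 < v.1 → σ' w = none := by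
                intro w hw h1 h2
                rcases htri w (hQ'sub hw) q hqQ with h3 | h3 | h3
                · exact ((ha1adj w hw h1 h3)).elim
                · subst h3; exact absurd hw hq'mem
                · rcases htri w (hQ'sub hw) b1 hb1Q with h4 | h4 | h4
                  · exact ((hb1adj w (hQ'sub hw) h3 h4)).elim
                  · subst h4; exact hb1n
                  · exact hbetw w hw h4 h2
              exact fun h => h2' a1 ha1Q' v hvQ' ca1 cv hca1 hcv
                (lt_trans ha1lt (lt_trans hb1gt hgt)) hbt (h ▸ rfl)
            · intro hyp
              have : ca1 = true := by
                apply h4' a1 ha1Q' ca1 hca1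
                intro w hw h1
                rcases htri w (hQ'sub hw) q hqQ with h3 | h3 | h3
                · exact ((ha1adj w hw h1 h3)).elim
                · subst h3; exact absurd hw hq'mem
                · rcases htri w (hQ'sub hw) b1 hb1Q with h4 | h4 | h4
                  · exact ((hb1adj w (hQ'sub hw) h3 h4)).elim
                  · subst h4; exact hb1n
                  · exact hyp w hw h4
              rw [this]; decide
            · intro _
              exact ⟨a1, ha1Q', ha1lt, ha1max, by rw [Bool.not_not]; exact hca1⟩
            · intro h; exact absurd ⟨a1, ha1Q', ha1lt⟩ h
          · refine ⟨false, ?_, ?_, fun _ => rfl, ?_, fun _ => rfl⟩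
            · intro u huQ' cu hcu hult _
              exact absurd ⟨u, huQ', hult⟩ hL
            · intro v hvQ' cv hcv hgt hbetw
              have hcvf : cv = false := by
                apply h3' v hvQ' cv hcv
                intro w hw h1
                rcases htri w (hQ'sub hw) q hqQ with h3 | h3 | h3
                · exact absurd ⟨w, hw, h3⟩ hL
                · subst h3; exact absurd hw hq'mem
                · rcases htri w (hQ'sub hw) b1 hb1Q with h4 | h4 | h4
                  · exact ((hb1adj w (hQ'sub hw) h3 h4)).elim
                  · subst h4; exact hb1n
                  · exact hbetw w hw h4 h1
              rw [hcvf]; decide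
            · intro h; exact absurd h hL
        set σ : Pt → Option Bool :=
          fun p => if p = q then some cq else if p = b1 then some (!cq) else σ' p with hσdef
        have hσq : σ q = some cq := by simp [hσdef]
        have hσb1 : σ b1 = some (!cq) := by simp [hσdef, hb1q]
        have hkeep : ∀ w c, σ' w = some c → σ w = some c := by
          intro w c h
          have hwq : w ≠ q := by rintro rfl; rw [hσ'q] at h; exact nomatch h
          have hwb : w ≠ b1 := by rintro rfl; rw [hb1n] at h; exact nomatch h
          simp [hσdef, hwq, hwb, h]
        have hback : ∀ w c, σ w = some c →
            (q = w ∧ cq = c) ∨ (b1 = w ∧ (!cq) = c) ∨ (w ≠ q ∧ w ≠ b1 ∧ σ' w = some c) := by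
          intro w c h
          by_cases h1 : w = q
          · subst h1; rw [hσq] at h; exact Or.inl ⟨rfl, Option.some.inj h⟩
          by_cases h2 : w = b1
          · subst h2; rw [hσb1] at h; exact Or.inr (Or.inl ⟨rfl, Option.some.inj h⟩)
          · right; right; refine ⟨h1, h2, ?_⟩
            rw [hσdef] at h; simpa [h1, h2] using h
        have hnone : ∀ w, σ w = none → w ≠ q ∧ w ≠ b1 ∧ σ' w = none := by
          intro w h
          by_cases h1 : w = q
          · subst h1; rw [hσq] at h; exact nomatch h
          by_cases h2 : w = b1
          · subst h2; rw [hσb1] at h; exact nomatch h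
          · refine ⟨h1, h2, ?_⟩; rw [hσdef] at h; simpa [h1, h2] using h
        refine ⟨σ, ?_, ?_, ?_, ?_, ?_, ?_⟩
        · intro p hp
          have h1 : p ≠ q := fun e => hp (e ▸ hqQ)
          have h2 : p ≠ b1 := fun e => hp (e ▸ hb1Q)
          have h3 : σ' p = none := hdom' p (fun hm => hp (hQ'sub hm))
          simp [hσdef, h1, h2, h3]
        · intro u hu v hv hun hvn hlt
          obtain ⟨huq, hub, hun'⟩ := hnone u hun
          obtain ⟨hvq, hvb, hvn'⟩ := hnone v hvn
          obtain ⟨w, hw, hw1, hw2⟩ := h1' u (hmem' u hu huq) v (hmem' v hv hvq) hun' hvn' hlt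
          exact ⟨w, hQ'sub hw, hw1, hw2⟩
        · intro u hu v hv cu cv hcu hcv hlt hbet
          rcases hback u cu hcu with ⟨rfl, rfl⟩ | ⟨rfl, rfl⟩ | ⟨huq, hub, hcu'⟩
          · rcases hback v cv hcv with ⟨rfl, rfl⟩ | ⟨rfl, rfl⟩ | ⟨hvq, hvb, hcv'⟩
            · exact absurd hlt (lt_irrefl _)
            · exact bne' cq
            · exfalso
              have hvQ' : v ∈ Q' := hmem' v hv hvq
              rcases htri v hv b1 hb1Q with h3 | h3 | h3
              · exact hb1adj v hv hlt h3
              · exact hvb h3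
              · have := hbet b1 hb1Q hb1gt h3
                rw [hσb1] at this; exact nomatch this
          · rcases hback v cv hcv with ⟨rfl, rfl⟩ | ⟨rfl, rfl⟩ | ⟨hvq, hvb, hcv'⟩
            · exact absurd hlt (not_lt.mpr (le_of_lt hb1gt))
            · exact absurd hlt (lt_irrefl _)
            · have hvQ' : v ∈ Q' := hmem' v hv hvq
              have hbetw : ∀ w ∈ Q', b1.1 < w.1 → w.1 < v.1 → σ' w = none :=
                fun w hw h1 h2 => (hnone w (hbet w (hQ'sub hw) h1 h2)).2.2
              exact fun h => (hE v hvQ' cv hcv' hlt hbetw) h.symm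
          · rcases hback v cv hcv with ⟨rfl, rfl⟩ | ⟨rfl, rfl⟩ | ⟨hvq, hvb, hcv'⟩
            · have huQ' : u ∈ Q' := hmem' u hu huq
              have hbetw : ∀ w ∈ Q', u.1 < w.1 → w.1 < q.1 → σ' w = none := by
                intro w hw h1 h2
                rcases htri w (hQ'sub hw) b1 hb1Q with h3 | h3 | h3
                · exact (hnone w (hbet w (hQ'sub hw) h1 h2)).2.2
                · subst h3; exact hb1n
                · exact absurd (lt_trans h3 (lt_trans h2 hb1gt)) (lt_irrefl b1.1)
              have : cu = !cq := hD u huQ' cu hcu' hlt hbetw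
              rw [this]; exact bne cq
            · exfalso
              have huQ' : u ∈ Q' := hmem' u hu huq
              rcases htri u hu q hqQ with h3 | h3 | h3
              · have := hbet q hqQ h3 hb1gt
                rw [hσq] at this; exact nomatch this
              · exact huq h3
              · exact hb1adj u hu h3 hlt
            · exact h2' u (hmem' u hu huq) v (hmem' v hv hvq) cu cv hcu' hcv' hlt
                (fun w hw h1 h2 => (hnone w (hbet w (hQ'sub hw) h1 h2)).2.2)
        · intro u hu cu hcu hleft
          rcases hback u cu hcu with ⟨rfl, rfl⟩ | ⟨rfl, rfl⟩ | ⟨huq, hub, hcu'⟩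
          · apply hGB
            rintro ⟨w, hwQ', hwlt⟩
            obtain ⟨a1, ha1Q', ha1lt, -, hca1⟩ := hLft ⟨w, hwQ', hwlt⟩
            have := hleft a1 (hQ'sub ha1Q') ha1lt
            rw [hkeep a1 _ hca1] at this; exact nomatch this
          · have := hleft q hqQ hb1gt
            rw [hσq] at this; exact nomatch this
          · exact h3' u (hmem' u hu huq) cu hcu'
              (fun w hw h1 => (hnone w (hleft w (hQ'sub hw) h1)).2.2)
        · intro u hu cu hcu hright
          rcases hback u cu hcu with ⟨rfl, rfl⟩ | ⟨rfl, rfl⟩ | ⟨huq, hub, hcu'⟩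
          · have := hright b1 hb1Q hb1gt
            rw [hσb1] at this; exact nomatch this
          · have : cq = false := hF (fun w hw h1 => (hnone w (hright w (hQ'sub hw) h1)).2.2)
            rw [this]; decide
          · have huQ' : u ∈ Q' := hmem' u hu huq
            rcases htri u hu q hqQ with h3 | h3 | h3
            · have := hright q hqQ h3
              rw [hσq] at this; exact nomatch this
            · exact absurd h3 huq
            · rcases htri u hu b1 hb1Q with h4 | h4 | h4
              · exact ((hb1adj u hu h3 h4)).elim
              · exact absurd h4 hub
              · exact h4' u huQ' cu hcu'
                  (fun w hw h1 => (hnone w (hright w (hQ'sub hw) h1)).2.2)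
        · intro q'' hq'' S hS hqS hconv hcards
          by_cases hq''q : q'' = q
          · subst hq''q
            by_cases hSR : ∃ s ∈ S, q''.1 < s.1
            · obtain ⟨s, hsS, hsgt⟩ := hSR
              have hsQ : s ∈ Q := (hS s hsS).1
              have hsq : s ≠ q'' := by rintro rfl; exact lt_irrefl _ hsgt
              have hsb1 : b1.1 ≤ s.1 := hb1min s (hmem' s hsQ hsq) hsgt
              have hb1S : b1 ∈ S :=
                hconv q'' hqS s hsS b1 hb1Q (hqmax b1 hb1Q) (le_of_lt hb1gt) hsb1
              exact ⟨q'', hqS, b1, hb1S, cq, !cq, hσq, hσb1, bne' cq⟩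
            · push_neg at hSR
              have hTne : (S.erase q'').Nonempty := by
                apply Finset.card_pos.mp
                have := Finset.card_erase_of_mem hqS
                omega
              obtain ⟨s0, hs0T⟩ := hTne
              have hs0S : s0 ∈ S := Finset.mem_of_mem_erase hs0T
              have hs0q : s0 ≠ q'' := (Finset.mem_erase.mp hs0T).1
              have hs0Q : s0 ∈ Q := (hS s0 hs0S).1
              have hs0lt : s0.1 < q''.1 :=
                lt_of_le_of_ne (hSR s0 hs0S) (fun h => hs0q (hxQ s0 hs0Q q'' hqQ h))
              have hs0Q' : s0 ∈ Q' := hmem' s0 hs0Q hs0q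
              obtain ⟨a1, ha1Q', ha1lt, ha1max, hca1⟩ := hLft ⟨s0, hs0Q', hs0lt⟩
              have ha1S : a1 ∈ S :=
                hconv s0 hs0S q'' hqS a1 (hQ'sub ha1Q') (hqmax a1 (hQ'sub ha1Q'))
                  (ha1max s0 hs0Q' hs0lt) (le_of_lt ha1lt)
              exact ⟨a1, ha1S, q'', hqS, !cq, cq, hkeep a1 _ hca1, hσq, bne cq⟩
          · exact hWold σ hkeep q'' hq'' hq''q S hS hqS hconv hcards
      · -- Case C : both neighbours coloured or absent; q stays uncoloured
        have hacol : ∀ w0 ∈ Q', w0.1 < q.1 →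
            ∃ a1 ∈ Q', a1.1 < q.1 ∧ (∀ w ∈ Q', w.1 < q.1 → w.1 ≤ a1.1) ∧
              ∃ c, σ' a1 = some c := by
          intro w0 hw0 hlt0
          have hTne : (Q'.filter (fun w => w.1 < q.1)).Nonempty :=
            ⟨w0, Finset.mem_filter.mpr ⟨hw0, hlt0⟩⟩
          obtain ⟨a1, ha1mem, ha1maxf⟩ := Finset.exists_max_image _ (fun p => p.1) hTne
          have ha1f := Finset.mem_filter.mp ha1mem
          have ha1max : ∀ w ∈ Q', w.1 < q.1 → w.1 ≤ a1.1 :=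
            fun w hw h => ha1maxf w (Finset.mem_filter.mpr ⟨hw, h⟩)
          refine ⟨a1, ha1f.1, ha1f.2, ha1max, ?_⟩
          cases hsa : σ' a1 with
          | some c => exact ⟨c, rfl⟩
          | none => exact absurd ⟨a1, ha1f.1, ⟨ha1f.2, ha1max⟩, hsa⟩ hA
        have hbcol : ∀ w0 ∈ Q', q.1 < w0.1 →
            ∃ b1 ∈ Q', q.1 < b1.1 ∧ (∀ w ∈ Q', q.1 < w.1 → b1.1 ≤ w.1) ∧
              ∃ c, σ' b1 = some c := by
          intro w0 hw0 hgt0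
          have hTne : (Q'.filter (fun w => q.1 < w.1)).Nonempty :=
            ⟨w0, Finset.mem_filter.mpr ⟨hw0, hgt0⟩⟩
          obtain ⟨b1, hb1mem, hb1minf⟩ := Finset.exists_min_image _ (fun p => p.1) hTne
          have hb1f := Finset.mem_filter.mp hb1mem
          have hb1min : ∀ w ∈ Q', q.1 < w.1 → b1.1 ≤ w.1 :=
            fun w hw h => hb1minf w (Finset.mem_filter.mpr ⟨hw, h⟩)
          refine ⟨b1, hb1f.1, hb1f.2, hb1min, ?_⟩
          cases hsb : σ' b1 with
          | some c => exact ⟨c, rfl⟩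
          | none => exact absurd ⟨b1, hb1f.1, ⟨hb1f.2, hb1min⟩, hsb⟩ hB
        refine ⟨σ', ?_, ?_, ?_, ?_, ?_, ?_⟩
        · intro p hp
          exact hdom' p (fun hm => hp (hQ'sub hm))
        · intro u hu v hv hun hvn hlt
          by_cases huq : u = q
          · have hvq : v ≠ q := by
              rintro rfl
              rw [huq] at hlt
              exact lt_irrefl _ hlt
            have hvQ' : v ∈ Q' := hmem' v hv hvq
            have hvgt : q.1 < v.1 := by rw [← huq]; exact hlt
            obtain ⟨b1, hb1Q', hb1gt, hb1min, cb, hcb⟩ := hbcol v hvQ' hvgt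
            have hb1v : b1 ≠ v := by
              rintro rfl
              rw [hvn] at hcb; exact nomatch hcb
            have hb1ltv : b1.1 < v.1 :=
              lt_of_le_of_ne (hb1min v hvQ' hvgt)
                (fun e => hb1v (hxQ b1 (hQ'sub hb1Q') v hv e))
            exact ⟨b1, hQ'sub hb1Q', by rw [huq]; exact hb1gt, hb1ltv⟩
          · by_cases hvq : v = q
            · have huQ' : u ∈ Q' := hmem' u hu huq
              have hult : u.1 < q.1 := by rw [← hvq]; exact hlt
              obtain ⟨a1, ha1Q', ha1lt, ha1max, ca, hca⟩ := hacol u huQ' hult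
              have ha1u : a1 ≠ u := by
                rintro rfl
                rw [hun] at hca; exact nomatch hca
              have hulta1 : u.1 < a1.1 :=
                lt_of_le_of_ne (ha1max u huQ' hult)
                  (fun e => ha1u (hxQ a1 (hQ'sub ha1Q') u hu e.symm))
              exact ⟨a1, hQ'sub ha1Q', hulta1, by rw [hvq]; exact ha1lt⟩
            · obtain ⟨w, hw, hw1, hw2⟩ :=
                h1' u (hmem' u hu huq) v (hmem' v hv hvq) hun hvn hlt
              exact ⟨w, hQ'sub hw, hw1, hw2⟩
        · intro u hu v hv cu cv hcu hcv hlt hbet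
          have huq : u ≠ q := by
            rintro rfl; rw [hσ'q] at hcu; exact nomatch hcu
          have hvq : v ≠ q := by
            rintro rfl; rw [hσ'q] at hcv; exact nomatch hcv
          exact h2' u (hmem' u hu huq) v (hmem' v hv hvq) cu cv hcu hcv hlt
            (fun w hw h1 h2 => hbet w (hQ'sub hw) h1 h2)
        · intro u hu cu hcu hleft
          have huq : u ≠ q := by
            rintro rfl; rw [hσ'q] at hcu; exact nomatch hcu
          exact h3' u (hmem' u hu huq) cu hcu (fun w hw h1 => hleft w (hQ'sub hw) h1)
        · intro u hu cu hcu hright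
          have huq : u ≠ q := by
            rintro rfl; rw [hσ'q] at hcu; exact nomatch hcu
          exact h4' u (hmem' u hu huq) cu hcu (fun w hw h1 => hright w (hQ'sub hw) h1)
        · intro q'' hq'' S hS hqS hconv hcards
          by_cases hq''q : q'' = q
          · subst hq''q
            by_cases hSL : ∃ s ∈ S, s.1 < q''.1
            · obtain ⟨sl, hslS, hsllt⟩ := hSL
              have hslq : sl ≠ q'' := by rintro rfl; exact lt_irrefl _ hsllt
              have hslQ' : sl ∈ Q' := hmem' sl (hS sl hslS).1 hslq
              obtain ⟨a1, ha1Q', ha1lt, ha1max, ca1, hca1⟩ := hacol sl hslQ' hsllt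
              have ha1S : a1 ∈ S :=
                hconv sl hslS q'' hqS a1 (hQ'sub ha1Q') (hqmax a1 (hQ'sub ha1Q'))
                  (ha1max sl hslQ' hsllt) (le_of_lt ha1lt)
              by_cases hSR : ∃ s ∈ S, q''.1 < s.1
              · obtain ⟨sr, hsrS, hsrgt⟩ := hSR
                have hsrq : sr ≠ q'' := by rintro rfl; exact lt_irrefl _ hsrgt
                have hsrQ' : sr ∈ Q' := hmem' sr (hS sr hsrS).1 hsrq
                obtain ⟨b1, hb1Q', hb1gt, hb1min, cb1, hcb1⟩ := hbcol sr hsrQ' hsrgt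
                have hb1S : b1 ∈ S :=
                  hconv q'' hqS sr hsrS b1 (hQ'sub hb1Q') (hqmax b1 (hQ'sub hb1Q'))
                    (le_of_lt hb1gt) (hb1min sr hsrQ' hsrgt)
                have hne' : ca1 ≠ cb1 := by
                  apply h2' a1 ha1Q' b1 hb1Q' ca1 cb1 hca1 hcb1 (lt_trans ha1lt hb1gt)
                  intro w hw h1 h2
                  exfalso
                  rcases htri w (hQ'sub hw) q'' hqQ with h3 | h3 | h3
                  · exact absurd (ha1max w hw h3) (not_le.mpr h1)
                  · subst h3; exact hq'mem hw
                  · exact absurd (hb1min w hw h3) (not_le.mpr h2)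
                exact ⟨a1, ha1S, b1, hb1S, ca1, cb1, hca1, hcb1, hne'⟩
              · -- everything (except q) in S lies to the left
                push_neg at hSR
                have ha1q : a1 ≠ q'' := by rintro rfl; exact lt_irrefl _ ha1lt
                have hT1 : a1 ∈ S.erase q'' := Finset.mem_erase.mpr ⟨ha1q, ha1S⟩
                have hT'ne : ((S.erase q'').erase a1).Nonempty := by
                  apply Finset.card_pos.mp
                  have e1 := Finset.card_erase_of_mem hqS
                  have e2 := Finset.card_erase_of_mem hT1
                  omega
                obtain ⟨a2, ha2mem, ha2maxf⟩ :=
                  Finset.exists_max_image _ (fun p => p.1) hT'ne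
                have ha2a1 : a2 ≠ a1 := (Finset.mem_erase.mp ha2mem).1
                have ha2T : a2 ∈ S.erase q'' := (Finset.mem_erase.mp ha2mem).2
                have ha2q : a2 ≠ q'' := (Finset.mem_erase.mp ha2T).1
                have ha2S : a2 ∈ S := (Finset.mem_erase.mp ha2T).2
                have ha2Q : a2 ∈ Q := (hS a2 ha2S).1
                have ha2Q' : a2 ∈ Q' := hmem' a2 ha2Q ha2q
                have ha2lt : a2.1 < q''.1 :=
                  lt_of_le_of_ne (hSR a2 ha2S) (fun e => ha2q (hxQ a2 ha2Q q'' hqQ e))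
                have ha2lta1 : a2.1 < a1.1 :=
                  lt_of_le_of_ne (ha1max a2 ha2Q' ha2lt)
                    (fun e => ha2a1 (hxQ a2 ha2Q a1 (hQ'sub ha1Q') e))
                have ha2adj : ∀ w ∈ Q', a2.1 < w.1 → w.1 < a1.1 → False := by
                  intro w hw h1 h2
                  have hwS : w ∈ S :=
                    hconv a2 ha2S a1 ha1S w (hQ'sub hw) (hqmax w (hQ'sub hw))
                      (le_of_lt h1) (le_of_lt h2)
                  have hwq : w ≠ q'' := by
                    rintro rfl; exact absurd (lt_trans h2 ha1lt) (lt_irrefl _)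
                  have hwa1 : w ≠ a1 := by rintro rfl; exact lt_irrefl _ h2
                  have hwmem : w ∈ (S.erase q'').erase a1 :=
                    Finset.mem_erase.mpr ⟨hwa1, Finset.mem_erase.mpr ⟨hwq, hwS⟩⟩
                  exact absurd (ha2maxf w hwmem) (not_le.mpr h1)
                cases hsa2 : σ' a2 with
                | some c2 =>
                  have hne' : c2 ≠ ca1 :=
                    h2' a2 ha2Q' a1 ha1Q' c2 ca1 hsa2 hca1 ha2lta1
                      (fun w hw h1 h2 => ((ha2adj w hw h1 h2)).elim)
                  exact ⟨a2, ha2S, a1, ha1S, c2, ca1, hsa2, hca1, hne'⟩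
                | none =>
                  have hT''ne : (((S.erase q'').erase a1).erase a2).Nonempty := by
                    apply Finset.card_pos.mp
                    have e1 := Finset.card_erase_of_mem hqS
                    have e2 := Finset.card_erase_of_mem hT1
                    have e3 := Finset.card_erase_of_mem ha2mem
                    omega
                  obtain ⟨a3, ha3mem, ha3maxf⟩ :=
                    Finset.exists_max_image _ (fun p => p.1) hT''ne
                  have ha3a2 : a3 ≠ a2 := (Finset.mem_erase.mp ha3mem).1
                  have ha3T' : a3 ∈ (S.erase q'').erase a1 := (Finset.mem_erase.mp ha3mem).2
                  have ha3a1 : a3 ≠ a1 := (Finset.mem_erase.mp ha3T').1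
                  have ha3T : a3 ∈ S.erase q'' := (Finset.mem_erase.mp ha3T').2
                  have ha3q : a3 ≠ q'' := (Finset.mem_erase.mp ha3T).1
                  have ha3S : a3 ∈ S := (Finset.mem_erase.mp ha3T).2
                  have ha3Q : a3 ∈ Q := (hS a3 ha3S).1
                  have ha3Q' : a3 ∈ Q' := hmem' a3 ha3Q ha3q
                  have ha3lt : a3.1 < q''.1 :=
                    lt_of_le_of_ne (hSR a3 ha3S) (fun e => ha3q (hxQ a3 ha3Q q'' hqQ e))
                  have ha3lta2 : a3.1 < a2.1 :=
                    lt_of_le_of_ne (ha2maxf a3 ha3T')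
                      (fun e => ha3a2 (hxQ a3 ha3Q a2 ha2Q e))
                  have ha3adj : ∀ w ∈ Q', a3.1 < w.1 → w.1 < a2.1 → False := by
                    intro w hw h1 h2
                    have hwS : w ∈ S :=
                      hconv a3 ha3S a2 ha2S w (hQ'sub hw) (hqmax w (hQ'sub hw))
                        (le_of_lt h1) (le_of_lt h2)
                    have hwq : w ≠ q'' := by
                      rintro rfl
                      exact absurd (lt_trans h2 (lt_trans ha2lta1 ha1lt)) (lt_irrefl _)
                    have hwa1 : w ≠ a1 := by
                      rintro rfl
                      exact absurd (lt_trans h2 ha2lta1) (lt_irrefl _)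
                    have hwa2 : w ≠ a2 := by rintro rfl; exact lt_irrefl _ h2
                    have hwmem : w ∈ ((S.erase q'').erase a1).erase a2 :=
                      Finset.mem_erase.mpr ⟨hwa2,
                        Finset.mem_erase.mpr ⟨hwa1, Finset.mem_erase.mpr ⟨hwq, hwS⟩⟩⟩
                    exact absurd (ha3maxf w hwmem) (not_le.mpr h1)
                  obtain ⟨c3, hc3⟩ : ∃ c, σ' a3 = some c := by
                    cases hsa3 : σ' a3 with
                    | some c => exact ⟨c, rfl⟩
                    | none =>
                      exfalso
                      obtain ⟨w, hw, h1, h2⟩ := h1' a3 ha3Q' a2 ha2Q' hsa3 hsa2 ha3lta2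
                      exact ha3adj w hw h1 h2
                  have hne' : c3 ≠ ca1 := by
                    apply h2' a3 ha3Q' a1 ha1Q' c3 ca1 hc3 hca1 (lt_trans ha3lta2 ha2lta1)
                    intro w hw h1 h2
                    rcases htri w (hQ'sub hw) a2 ha2Q with h3 | h3 | h3
                    · exact ((ha3adj w hw h1 h3)).elim
                    · subst h3; exact hsa2
                    · exact ((ha2adj w hw h3 h2)).elim
                  exact ⟨a3, ha3S, a1, ha1S, c3, ca1, hc3, hca1, hne'⟩
            · -- nothing to the left of q'' in S
              push_neg at hSL
              by_cases hSR : ∃ s ∈ S, q''.1 < s.1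
              · obtain ⟨sr, hsrS, hsrgt⟩ := hSR
                have hsrq : sr ≠ q'' := by rintro rfl; exact lt_irrefl _ hsrgt
                have hsrQ' : sr ∈ Q' := hmem' sr (hS sr hsrS).1 hsrq
                obtain ⟨b1, hb1Q', hb1gt, hb1min, cb1, hcb1⟩ := hbcol sr hsrQ' hsrgt
                have hb1S : b1 ∈ S :=
                  hconv q'' hqS sr hsrS b1 (hQ'sub hb1Q') (hqmax b1 (hQ'sub hb1Q'))
                    (le_of_lt hb1gt) (hb1min sr hsrQ' hsrgt)
                have hb1q : b1 ≠ q'' := by rintro rfl; exact lt_irrefl _ hb1gt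
                have hT1 : b1 ∈ S.erase q'' := Finset.mem_erase.mpr ⟨hb1q, hb1S⟩
                have hT'ne : ((S.erase q'').erase b1).Nonempty := by
                  apply Finset.card_pos.mp
                  have e1 := Finset.card_erase_of_mem hqS
                  have e2 := Finset.card_erase_of_mem hT1
                  omega
                obtain ⟨b2, hb2mem, hb2minf⟩ :=
                  Finset.exists_min_image _ (fun p => p.1) hT'ne
                have hb2b1 : b2 ≠ b1 := (Finset.mem_erase.mp hb2mem).1
                have hb2T : b2 ∈ S.erase q'' := (Finset.mem_erase.mp hb2mem).2
                have hb2q : b2 ≠ q'' := (Finset.mem_erase.mp hb2T).1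
                have hb2S : b2 ∈ S := (Finset.mem_erase.mp hb2T).2
                have hb2Q : b2 ∈ Q := (hS b2 hb2S).1
                have hb2Q' : b2 ∈ Q' := hmem' b2 hb2Q hb2q
                have hb2gt : q''.1 < b2.1 :=
                  lt_of_le_of_ne (hSL b2 hb2S) (fun e => hb2q (hxQ b2 hb2Q q'' hqQ e.symm))
                have hb1ltb2 : b1.1 < b2.1 :=
                  lt_of_le_of_ne (hb1min b2 hb2Q' hb2gt)
                    (fun e => hb2b1 (hxQ b2 hb2Q b1 (hQ'sub hb1Q') e.symm))
                have hb2adj : ∀ w ∈ Q', b1.1 < w.1 → w.1 < b2.1 → False := by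
                  intro w hw h1 h2
                  have hwS : w ∈ S :=
                    hconv b1 hb1S b2 hb2S w (hQ'sub hw) (hqmax w (hQ'sub hw))
                      (le_of_lt h1) (le_of_lt h2)
                  have hwq : w ≠ q'' := by
                    rintro rfl
                    exact absurd (lt_trans hb1gt h1) (lt_irrefl _)
                  have hwb1 : w ≠ b1 := by rintro rfl; exact lt_irrefl _ h1
                  have hwmem : w ∈ (S.erase q'').erase b1 :=
                    Finset.mem_erase.mpr ⟨hwb1, Finset.mem_erase.mpr ⟨hwq, hwS⟩⟩
                  exact absurd (hb2minf w hwmem) (not_le.mpr h2)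
                cases hsb2 : σ' b2 with
                | some c2 =>
                  have hne' : cb1 ≠ c2 :=
                    h2' b1 hb1Q' b2 hb2Q' cb1 c2 hcb1 hsb2 hb1ltb2
                      (fun w hw h1 h2 => ((hb2adj w hw h1 h2)).elim)
                  exact ⟨b1, hb1S, b2, hb2S, cb1, c2, hcb1, hsb2, hne'⟩
                | none =>
                  have hT''ne : (((S.erase q'').erase b1).erase b2).Nonempty := by
                    apply Finset.card_pos.mp
                    have e1 := Finset.card_erase_of_mem hqS
                    have e2 := Finset.card_erase_of_mem hT1
                    have e3 := Finset.card_erase_of_mem hb2mem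
                    omega
                  obtain ⟨b3, hb3mem, hb3minf⟩ :=
                    Finset.exists_min_image _ (fun p => p.1) hT''ne
                  have hb3b2 : b3 ≠ b2 := (Finset.mem_erase.mp hb3mem).1
                  have hb3T' : b3 ∈ (S.erase q'').erase b1 := (Finset.mem_erase.mp hb3mem).2
                  have hb3b1 : b3 ≠ b1 := (Finset.mem_erase.mp hb3T').1
                  have hb3T : b3 ∈ S.erase q'' := (Finset.mem_erase.mp hb3T').2
                  have hb3q : b3 ≠ q'' := (Finset.mem_erase.mp hb3T).1
                  have hb3S : b3 ∈ S := (Finset.mem_erase.mp hb3T).2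
                  have hb3Q : b3 ∈ Q := (hS b3 hb3S).1
                  have hb3Q' : b3 ∈ Q' := hmem' b3 hb3Q hb3q
                  have hb3gt : q''.1 < b3.1 :=
                    lt_of_le_of_ne (hSL b3 hb3S) (fun e => hb3q (hxQ b3 hb3Q q'' hqQ e.symm))
                  have hb2ltb3 : b2.1 < b3.1 :=
                    lt_of_le_of_ne (hb2minf b3 hb3T')
                      (fun e => hb3b2 (hxQ b3 hb3Q b2 hb2Q e.symm))
                  have hb3adj : ∀ w ∈ Q', b2.1 < w.1 → w.1 < b3.1 → False := by
                    intro w hw h1 h2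
                    have hwS : w ∈ S :=
                      hconv b2 hb2S b3 hb3S w (hQ'sub hw) (hqmax w (hQ'sub hw))
                        (le_of_lt h1) (le_of_lt h2)
                    have hwq : w ≠ q'' := by
                      rintro rfl
                      exact absurd (lt_trans hb2gt h1) (lt_irrefl _)
                    have hwb1 : w ≠ b1 := by
                      rintro rfl
                      exact absurd (lt_trans hb1ltb2 h1) (lt_irrefl _)
                    have hwb2 : w ≠ b2 := by rintro rfl; exact lt_irrefl _ h1
                    have hwmem : w ∈ ((S.erase q'').erase b1).erase b2 :=
                      Finset.mem_erase.mpr ⟨hwb2,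
                        Finset.mem_erase.mpr ⟨hwb1, Finset.mem_erase.mpr ⟨hwq, hwS⟩⟩⟩
                    exact absurd (hb3minf w hwmem) (not_le.mpr h2)
                  obtain ⟨c3, hc3⟩ : ∃ c, σ' b3 = some c := by
                    cases hsb3 : σ' b3 with
                    | some c => exact ⟨c, rfl⟩
                    | none =>
                      exfalso
                      obtain ⟨w, hw, h1, h2⟩ := h1' b2 hb2Q' b3 hb3Q' hsb2 hsb3 hb2ltb3
                      exact hb3adj w hw h1 h2
                  have hne' : cb1 ≠ c3 := by
                    apply h2' b1 hb1Q' b3 hb3Q' cb1 c3 hcb1 hc3 (lt_trans hb1ltb2 hb2ltb3)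
                    intro w hw h1 h2
                    rcases htri w (hQ'sub hw) b2 hb2Q with h3 | h3 | h3
                    · exact ((hb2adj w hw h1 h3)).elim
                    · subst h3; exact hsb2
                    · exact ((hb3adj w hw h3 h2)).elim
                  exact ⟨b1, hb1S, b3, hb3S, cb1, c3, hcb1, hc3, hne'⟩
              · exfalso
                push_neg at hSR
                have hsub : S ⊆ {q''} := by
                  intro s hs
                  rw [Finset.mem_singleton]
                  exact hxQ s (hS s hs).1 q'' hqQ
                    (le_antisymm (hSR s hs) (hSL s hs))
                have := Finset.card_le_card hsub
                rw [Finset.card_singleton] at this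
                omega
          · exact hWold σ' (fun _ _ h => h) q'' hq'' hq''q S hS hqS hconv hcards




end Stmt3Aux

theorem stmt3 (P : Finset (ℝ × ℝ))
    (hx : ∀ p ∈ P, ∀ q ∈ P, p.1 = q.1 → p = q)
    (hy : ∀ p ∈ P, ∀ q ∈ P, p.2 = q.2 → p = q) :
    ∃ f : ℝ × ℝ → Fin 2, ∀ a b c : ℝ, a < b →
      4 ≤ (bottomless a b c ∩ ↑P).ncard →
      ∃ p ∈ P, ∃ q ∈ P, p ∈ bottomless a b c ∧ q ∈ bottomless a b c ∧ f p ≠ f q := by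
  classical
  obtain ⟨σ, -, -, -, -, -, hwin⟩ :=
    Stmt3Aux.main P hx hy P.card P le_rfl subset_rfl (fun p hp _ _ _ => hp)
  refine ⟨fun p => if (σ p).getD false then 1 else 0, ?_⟩
  intro a b c hab hcard
  set S : Finset (ℝ × ℝ) := P.filter (fun p => a < p.1 ∧ p.1 < b ∧ p.2 < c) with hSdef
  have hmemS : ∀ p, p ∈ S ↔ p ∈ P ∧ (a < p.1 ∧ p.1 < b ∧ p.2 < c) := fun p => Finset.mem_filter
  have hScoe : bottomless a b c ∩ ↑P = ↑S := by
    ext p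
    constructor
    · rintro ⟨hb, hp⟩
      exact (hmemS p).mpr ⟨hp, hb⟩
    · intro hp
      obtain ⟨h1, h2⟩ := (hmemS p).mp hp
      exact ⟨h2, h1⟩
  rw [hScoe, Set.ncard_coe_finset] at hcard
  have hSne : S.Nonempty := Finset.card_pos.mp (by omega)
  obtain ⟨q, hqS, hqmax⟩ := S.exists_max_image (fun p => p.2) hSne
  have hmem : ∀ s ∈ S, s ∈ P ∧ a < s.1 ∧ s.1 < b ∧ s.2 < c := by
    intro s hs; exact ⟨(Finset.mem_filter.mp hs).1, (Finset.mem_filter.mp hs).2⟩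
  obtain ⟨hqP, hqa, hqb, hqc⟩ := hmem q hqS
  have hconv : ∀ s1 ∈ S, ∀ s2 ∈ S, ∀ r ∈ P, r.2 ≤ q.2 → s1.1 ≤ r.1 → r.1 ≤ s2.1 → r ∈ S := by
    intro s1 hs1 s2 hs2 r hrP hrle h1 h2
    obtain ⟨-, hs1a, -, -⟩ := hmem s1 hs1
    obtain ⟨-, -, hs2b, -⟩ := hmem s2 hs2
    exact Finset.mem_filter.mpr ⟨hrP, lt_of_lt_of_le hs1a h1, lt_of_le_of_lt h2 hs2b,
      lt_of_le_of_lt hrle hqc⟩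
  obtain ⟨p1, hp1, p2, hp2, c1, c2, hc1, hc2, hcc⟩ :=
    hwin q hqP S (fun s hs => ⟨(hmem s hs).1, hqmax s hs⟩) hqS hconv hcard
  obtain ⟨hp1P, hp1a, hp1b, hp1c⟩ := hmem p1 hp1
  obtain ⟨hp2P, hp2a, hp2b, hp2c⟩ := hmem p2 hp2
  refine ⟨p1, hp1P, p2, hp2P, ⟨hp1a, hp1b, hp1c⟩, ⟨hp2a, hp2b, hp2c⟩, ?_⟩
  simp only [hc1, hc2, Option.getD_some]
  cases c1 <;> cases c2 <;> first | exact absurd rfl hcc | decide
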